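/- Let γ : H × E → H satisfy the γ-regularity conditions, let M ⊆ H be nonempty. Suppose there are an open set U ⊆ H, an integer m ≥ 1, a set V ⊆ ℝ^m_+ open in ℝ^m_+, and a homeomorphism φ : V → U ∩ M which is the restriction of a twice continuously Fréchet differentiable map φ : ℝ^m → H with bounded first and second derivatives and with Dφ(y') injective for every y' ∈ V, such that φ⁻¹ extends to a continuously Fréchet differentiable map Φ : H → ℝ^m with bounded derivative. Let h ∈ U ∩ M with y := Φ(h) ∈ ∂V (i.e. y₁ = 0), let η be the inward pointing normal vector associated with Dφ(y), and assume there exist δ > 0 and B ∈ ℰ with F(E ∖ B) < ∞ such that for every h' ∈ M with ‖h' − h‖ < δ one has h' + γ(h',x) ∈ U ∩ M for F-almost all x ∈ B. Then ∫_E |⟨η, γ(h,x)⟩| F(dx) < ∞ if and only if ∫_E |⟨η, Dφ(y)(Φ(h + γ(h,x)) − Φ(h))⟩| F(dx) < ∞. -/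

import Mathlib

open MeasureTheory
open scoped ENNReal InnerProductSpace

theorem stmt_14
    {H E : Type*}
    [NormedAddCommGroup H] [InnerProductSpace ℝ H] [CompleteSpace H]
    [TopologicalSpace.SeparableSpace H] [MeasurableSpace H] [BorelSpace H]
    [MeasurableSpace E] (F : Measure E) [SigmaFinite F]
    (γ : H → E → H) (hγmeas : Measurable (Function.uncurry γ))
    (ρ : ℕ → E → ℝ)
    (hρmeas : ∀ n, Measurable (ρ n))
    (hρnonneg : ∀ n x, 0 ≤ ρ n x)
    (hρint : ∀ n, Integrable (fun x => ρ n x ^ 2) F)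
    (hγLip : ∀ n : ℕ, ∀ x : E, ∀ h₁ h₂ : H, ‖h₁‖ ≤ (n : ℝ) → ‖h₂‖ ≤ (n : ℝ) →
      ‖γ h₁ x - γ h₂ x‖ ≤ ρ n x * ‖h₁ - h₂‖)
    (hγbd : ∀ n : ℕ, ∀ x : E, ∀ h : H, ‖h‖ ≤ (n : ℝ) → ‖γ h x‖ ≤ ρ n x)
    (M : Set H) (hMne : M.Nonempty)
    (U : Set H) (hU : IsOpen U)
    (m : ℕ) [NeZero m] (hm : 1 ≤ m)
    (V : Set (EuclideanSpace ℝ (Fin m)))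
    (hV : ∃ Vt : Set (EuclideanSpace ℝ (Fin m)), IsOpen Vt ∧
      Vt ∩ {y : EuclideanSpace ℝ (Fin m) | 0 ≤ y 0} = V)
    (φ : EuclideanSpace ℝ (Fin m) → H)
    (hφC2 : ContDiff ℝ 2 φ)
    (hφbd1 : ∃ C : ℝ, ∀ y', ‖fderiv ℝ φ y'‖ ≤ C)
    (hφbd2 : ∃ C : ℝ, ∀ y', ‖fderiv ℝ (fderiv ℝ φ) y'‖ ≤ C)
    (hφinj : ∀ y' ∈ V, Function.Injective (fderiv ℝ φ y'))
    (hφbij : Set.BijOn φ V (U ∩ M))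
    (Φ : H → EuclideanSpace ℝ (Fin m))
    (hΦC1 : ContDiff ℝ 1 Φ)
    (hΦbd : ∃ C : ℝ, ∀ h', ‖fderiv ℝ Φ h'‖ ≤ C)
    (hΦφ : ∀ y' ∈ V, Φ (φ y') = y')
    (hφΦ : ∀ h' ∈ U ∩ M, φ (Φ h') = h')
    (h : H) (hhUM : h ∈ U ∩ M)
    (y : EuclideanSpace ℝ (Fin m)) (hy : y = Φ h) (hyV : y ∈ V) (hybd : y 0 = 0)
    -- η is the inward pointing normal vector associated with Dφ(y)
    (η : H)
    (hη₁ : η ∈ ⇑(fderiv ℝ φ y) '' {w : EuclideanSpace ℝ (Fin m) | 0 ≤ w 0})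
    (hη₂ : ‖η‖ = 1)
    (hη₃ : ∀ v : EuclideanSpace ℝ (Fin m), v 0 = 0 → ⟪η, fderiv ℝ φ y v⟫_ℝ = 0)
    (δ : ℝ) (hδ : 0 < δ)
    (B : Set E) (hB : MeasurableSet B) (hBfin : F Bᶜ < ⊤)
    (hjump : ∀ h' ∈ M, ‖h' - h‖ < δ → ∀ᵐ x ∂F, x ∈ B → h' + γ h' x ∈ U ∩ M) :
    Integrable (fun x => |⟪η, γ h x⟫_ℝ|) F ↔
      Integrable (fun x => |⟪η, fderiv ℝ φ y (Φ (h + γ h x) - Φ h)⟫_ℝ|) F := by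
  classical
  obtain ⟨C₂, hC₂⟩ := hφbd2
  obtain ⟨CΦ, hCΦ⟩ := hΦbd
  have hC₂0 : 0 ≤ C₂ := le_trans (ContinuousLinearMap.opNorm_nonneg _) (hC₂ 0)
  have hCΦ0 : 0 ≤ CΦ := le_trans (norm_nonneg _) (hCΦ 0)
  have hΦdiff : Differentiable ℝ Φ := hΦC1.differentiable one_ne_zero
  have hφdiff : Differentiable ℝ φ := hφC2.differentiable (by norm_num)
  have hφ'C1 : ContDiff ℝ 1 (fderiv ℝ φ) := hφC2.fderiv_right (le_refl _)
  have hφ'diff : Differentiable ℝ (fderiv ℝ φ) := hφ'C1.differentiable one_ne_zero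
  -- Lipschitz bound for Φ
  have hΦlip : ∀ a b : H, ‖Φ a - Φ b‖ ≤ CΦ * ‖a - b‖ := fun a b =>
    Convex.norm_image_sub_le_of_norm_fderiv_le (fun z _ => hΦdiff z)
      (fun z _ => hCΦ z) convex_univ (Set.mem_univ b) (Set.mem_univ a)
  -- Lipschitz bound for fderiv φ
  have hφ'lip : ∀ a b : EuclideanSpace ℝ (Fin m),
      ‖fderiv ℝ φ a - fderiv ℝ φ b‖ ≤ C₂ * ‖a - b‖ := fun a b =>
    Convex.norm_image_sub_le_of_norm_fderiv_le (fun z _ => hφ'diff z)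
      (fun z _ => hC₂ z) convex_univ (Set.mem_univ b) (Set.mem_univ a)
  -- Taylor estimate
  have hTaylor : ∀ a : EuclideanSpace ℝ (Fin m),
      ‖φ a - φ y - fderiv ℝ φ y (a - y)‖ ≤ C₂ * ‖a - y‖ ^ 2 := by
    intro a
    have key : ∀ z ∈ Metric.closedBall y ‖a - y‖,
        HasFDerivWithinAt (fun w => φ w - fderiv ℝ φ y w)
          (fderiv ℝ φ z - fderiv ℝ φ y) (Metric.closedBall y ‖a - y‖) z := fun z _ =>
      ((hφdiff z).hasFDerivAt.sub (fderiv ℝ φ y).hasFDerivAt).hasFDerivWithinAt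
    have bnd : ∀ z ∈ Metric.closedBall y ‖a - y‖,
        ‖fderiv ℝ φ z - fderiv ℝ φ y‖ ≤ C₂ * ‖a - y‖ := by
      intro z hz
      refine le_trans (hφ'lip z y) (mul_le_mul_of_nonneg_left ?_ hC₂0)
      rw [Metric.mem_closedBall, dist_eq_norm] at hz
      exact hz
    have hmain := (convex_closedBall y ‖a - y‖).norm_image_sub_le_of_norm_hasFDerivWithin_le
      key bnd (Metric.mem_closedBall_self (norm_nonneg _))
      (by rw [Metric.mem_closedBall, dist_eq_norm])
    have heq : (φ a - fderiv ℝ φ y a) - (φ y - fderiv ℝ φ y y)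
        = φ a - φ y - fderiv ℝ φ y (a - y) := by
      rw [map_sub]; abel
    rw [heq] at hmain
    calc ‖φ a - φ y - fderiv ℝ φ y (a - y)‖ ≤ C₂ * ‖a - y‖ * ‖a - y‖ := hmain
      _ = C₂ * ‖a - y‖ ^ 2 := by ring
  set n : ℕ := ⌈‖h‖⌉₊ with hndef
  have hhn : ‖h‖ ≤ (n : ℝ) := Nat.le_ceil _
  have hγle : ∀ x, ‖γ h x‖ ≤ ρ n x := fun x => hγbd n x h hhn
  have hρ0 : ∀ x, 0 ≤ ρ n x := hρnonneg n
  -- measurability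
  have hγhmeas : Measurable fun x => γ h x :=
    hγmeas.comp (measurable_const.prodMk measurable_id)
  have hf₁meas : Measurable fun x => ⟪η, γ h x⟫_ℝ :=
    (continuous_const.inner continuous_id).measurable.comp hγhmeas
  have hcont₂ : Continuous fun v : H => ⟪η, fderiv ℝ φ y (Φ (h + v) - Φ h)⟫_ℝ := by
    exact continuous_const.inner ((fderiv ℝ φ y).continuous.comp
      ((hΦC1.continuous.comp (continuous_const.add continuous_id)).sub continuous_const))
  have hf₂meas : Measurable fun x => ⟪η, fderiv ℝ φ y (Φ (h + γ h x) - Φ h)⟫_ℝ :=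
    hcont₂.measurable.comp hγhmeas
  set g : E → ℝ := fun x =>
    ⟪η, γ h x⟫_ℝ - ⟪η, fderiv ℝ φ y (Φ (h + γ h x) - Φ h)⟫_ℝ with hgdef
  have hgmeas : Measurable g := hf₁meas.sub hf₂meas
  -- a.e. bound for g
  have hjh : ∀ᵐ x ∂F, x ∈ B → h + γ h x ∈ U ∩ M :=
    hjump h hhUM.2 (by simpa using hδ)
  have hbound : ∀ᵐ x ∂F, ‖g x‖ ≤ C₂ * CΦ ^ 2 * ρ n x ^ 2
      + (1 + ‖fderiv ℝ φ y‖ * CΦ) * Set.indicator Bᶜ (ρ n) x := by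
    filter_upwards [hjh] with x hx
    have hind0 : 0 ≤ Set.indicator Bᶜ (ρ n) x :=
      Set.indicator_nonneg (fun z _ => hρ0 z) x
    have hsq0 : 0 ≤ C₂ * CΦ ^ 2 * ρ n x ^ 2 := by positivity
    have hK0 : 0 ≤ 1 + ‖fderiv ℝ φ y‖ * CΦ := by positivity
    rw [Real.norm_eq_abs]
    by_cases hxB : x ∈ B
    · have hmem := hx hxB
      have hφa : φ (Φ (h + γ h x)) = h + γ h x := hφΦ _ hmem
      have hφy : φ y = h := by rw [hy]; exact hφΦ h hhUM
      have hΦh : Φ h = y := hy.symm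
      have hg : g x = ⟪η, φ (Φ (h + γ h x)) - φ y
          - fderiv ℝ φ y (Φ (h + γ h x) - y)⟫_ℝ := by
        simp only [hgdef, hΦh, ← inner_sub_right]
        congr 1
        rw [hφa, hφy]
        abel
      have h2 : ‖Φ (h + γ h x) - y‖ ≤ CΦ * ρ n x := by
        calc ‖Φ (h + γ h x) - y‖ = ‖Φ (h + γ h x) - Φ h‖ := by rw [hΦh]
          _ ≤ CΦ * ‖(h + γ h x) - h‖ := hΦlip _ _
          _ = CΦ * ‖γ h x‖ := by rw [add_sub_cancel_left]
          _ ≤ CΦ * ρ n x := mul_le_mul_of_nonneg_left (hγle x) hCΦ0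
      have hmainle : |g x| ≤ C₂ * CΦ ^ 2 * ρ n x ^ 2 := by
        rw [hg]
        calc |⟪η, φ (Φ (h + γ h x)) - φ y - fderiv ℝ φ y (Φ (h + γ h x) - y)⟫_ℝ|
            ≤ ‖η‖ * ‖φ (Φ (h + γ h x)) - φ y - fderiv ℝ φ y (Φ (h + γ h x) - y)‖ :=
              abs_real_inner_le_norm _ _
          _ = ‖φ (Φ (h + γ h x)) - φ y - fderiv ℝ φ y (Φ (h + γ h x) - y)‖ := by
              rw [hη₂, one_mul]
          _ ≤ C₂ * ‖Φ (h + γ h x) - y‖ ^ 2 := hTaylor _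
          _ ≤ C₂ * (CΦ * ρ n x) ^ 2 := by
              exact mul_le_mul_of_nonneg_left
                (pow_le_pow_left₀ (norm_nonneg _) h2 2) hC₂0
          _ = C₂ * CΦ ^ 2 * ρ n x ^ 2 := by ring
      have hnn : 0 ≤ (1 + ‖fderiv ℝ φ y‖ * CΦ) * Set.indicator Bᶜ (ρ n) x :=
        mul_nonneg hK0 hind0
      linarith
    · have hind : Set.indicator Bᶜ (ρ n) x = ρ n x :=
        Set.indicator_of_mem (by simpa using hxB) _
      have h1 : |⟪η, γ h x⟫_ℝ| ≤ ρ n x := by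
        calc |⟪η, γ h x⟫_ℝ| ≤ ‖η‖ * ‖γ h x‖ := abs_real_inner_le_norm _ _
          _ = ‖γ h x‖ := by rw [hη₂, one_mul]
          _ ≤ ρ n x := hγle x
      have h2 : |⟪η, fderiv ℝ φ y (Φ (h + γ h x) - Φ h)⟫_ℝ|
          ≤ ‖fderiv ℝ φ y‖ * CΦ * ρ n x := by
        calc |⟪η, fderiv ℝ φ y (Φ (h + γ h x) - Φ h)⟫_ℝ|
            ≤ ‖η‖ * ‖fderiv ℝ φ y (Φ (h + γ h x) - Φ h)‖ := abs_real_inner_le_norm _ _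
          _ = ‖fderiv ℝ φ y (Φ (h + γ h x) - Φ h)‖ := by rw [hη₂, one_mul]
          _ ≤ ‖fderiv ℝ φ y‖ * ‖Φ (h + γ h x) - Φ h‖ := (fderiv ℝ φ y).le_opNorm _
          _ ≤ ‖fderiv ℝ φ y‖ * (CΦ * ‖(h + γ h x) - h‖) :=
              mul_le_mul_of_nonneg_left (hΦlip _ _) (norm_nonneg _)
          _ = ‖fderiv ℝ φ y‖ * (CΦ * ‖γ h x‖) := by rw [add_sub_cancel_left]
          _ ≤ ‖fderiv ℝ φ y‖ * (CΦ * ρ n x) :=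
              mul_le_mul_of_nonneg_left
                (mul_le_mul_of_nonneg_left (hγle x) hCΦ0) (norm_nonneg _)
          _ = ‖fderiv ℝ φ y‖ * CΦ * ρ n x := by ring
      have habs : |g x| ≤ |⟪η, γ h x⟫_ℝ|
          + |⟪η, fderiv ℝ φ y (Φ (h + γ h x) - Φ h)⟫_ℝ| := abs_sub _ _
      rw [hind]
      nlinarith [hρ0 x]
  -- integrability of the dominating function
  have hone : Integrable (Set.indicator Bᶜ (fun _ => (1 : ℝ))) F :=
    (integrable_indicator_iff hB.compl).mpr
      (integrableOn_const (C := (1 : ℝ)) hBfin.ne)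
  have hindmeas : Measurable (Set.indicator Bᶜ (ρ n)) := (hρmeas n).indicator hB.compl
  have hind_int : Integrable (Set.indicator Bᶜ (ρ n)) F := by
    refine Integrable.mono' ((hρint n).add hone) hindmeas.aestronglyMeasurable ?_
    filter_upwards with x
    simp only [Pi.add_apply]
    rw [Real.norm_eq_abs,
      abs_of_nonneg (Set.indicator_nonneg (fun z _ => hρ0 z) x)]
    by_cases hx : x ∈ Bᶜ
    · rw [Set.indicator_of_mem hx, Set.indicator_of_mem hx]
      nlinarith [hρ0 x, sq_nonneg (ρ n x - 1)]
    · rw [Set.indicator_of_notMem hx, Set.indicator_of_notMem hx]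
      positivity
  have hGint : Integrable (fun x => C₂ * CΦ ^ 2 * ρ n x ^ 2
      + (1 + ‖fderiv ℝ φ y‖ * CΦ) * Set.indicator Bᶜ (ρ n) x) F :=
    ((hρint n).const_mul _).add (hind_int.const_mul _)
  have hgint : Integrable g F := hGint.mono' hgmeas.aestronglyMeasurable hbound
  -- conclude
  have key : Integrable (fun x => ⟪η, γ h x⟫_ℝ) F ↔
      Integrable (fun x => ⟪η, fderiv ℝ φ y (Φ (h + γ h x) - Φ h)⟫_ℝ) F := by
    constructor
    · intro h1
      have h2 : Integrable (fun x => ⟪η, γ h x⟫_ℝ - g x) F := h1.sub hgint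
      have heq : (fun x => ⟪η, γ h x⟫_ℝ - g x)
          = fun x => ⟪η, fderiv ℝ φ y (Φ (h + γ h x) - Φ h)⟫_ℝ := by
        funext x; simp [hgdef]
      rwa [heq] at h2
    · intro h2
      have h1 : Integrable
          (fun x => ⟪η, fderiv ℝ φ y (Φ (h + γ h x) - Φ h)⟫_ℝ + g x) F := h2.add hgint
      have heq : (fun x => ⟪η, fderiv ℝ φ y (Φ (h + γ h x) - Φ h)⟫_ℝ + g x)
          = fun x => ⟪η, γ h x⟫_ℝ := by
        funext x; simp [hgdef]
      rwa [heq] at h1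
  have e₁ : Integrable (fun x => |⟪η, γ h x⟫_ℝ|) F ↔
      Integrable (fun x => ⟪η, γ h x⟫_ℝ) F := by
    rw [← integrable_norm_iff hf₁meas.aestronglyMeasurable]
    simp only [Real.norm_eq_abs]
  have e₂ : Integrable (fun x => |⟪η, fderiv ℝ φ y (Φ (h + γ h x) - Φ h)⟫_ℝ|) F ↔
      Integrable (fun x => ⟪η, fderiv ℝ φ y (Φ (h + γ h x) - Φ h)⟫_ℝ) F := by
    rw [← integrable_norm_iff hf₂meas.aestronglyMeasurable]
    simp only [Real.norm_eq_abs]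
  exact (e₁.trans key).trans e₂.symm
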